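/- Let a_1, ..., a_m be elements of L = GF(2^n) and k_1, ..., k_m positive integers, and set Q(x) = \sum_{i=1}^m a_i x^{2^{k_i}+1} and L(u) = \sum_{i=1}^m ( a_i u^{2^{k_i}} + a_i^{2^{-k_i}} u^{2^{-k_i}} ). If u in L satisfies L(u) = 0, then for every x in L one has Tr(Q(x + u)) = Tr(Q(x)) + Tr(Q(u)). In particular, the map u \mapsto (-1)^{Tr(Q(u))} is a character of the additive group K = { u \in L : L(u) = 0 }. -/

import Mathlib

noncomputable instance {n : ℕ} : Fintype (GaloisField 2 n) := Fintype.ofFinite _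

/-- `ipow j x` is `x^{2^{-j}}`, the unique element of `GF(2^n)` whose `2^j`-th power is `x`
(the inverse of the `j`-th iterate of the Frobenius automorphism). -/
noncomputable def ipow {n : ℕ} (j : ℕ) (x : GaloisField 2 n) : GaloisField 2 n :=
  Function.invFun (fun y : GaloisField 2 n => y ^ 2 ^ j) x

lemma pow2_bijective {n : ℕ} (j : ℕ) :
    Function.Bijective (fun y : GaloisField 2 n => y ^ 2 ^ j) := by
  have := (iterateFrobeniusEquiv (GaloisField 2 n) 2 j).bijective
  convert this using 1
  funext y
  simp [coe_iterateFrobeniusEquiv, iterateFrobenius_def]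

lemma ipow_pow {n : ℕ} (j : ℕ) (x : GaloisField 2 n) : (ipow j x) ^ 2 ^ j = x :=
  Function.rightInverse_invFun (pow2_bijective j).surjective x

lemma frob_algEquiv (n : ℕ) : ∃ e : GaloisField 2 n ≃ₐ[ZMod 2] GaloisField 2 n,
    ∀ x, e x = x ^ 2 := by
  refine ⟨AlgEquiv.ofRingEquiv (f := frobeniusEquiv (GaloisField 2 n) 2) ?_, fun x => rfl⟩
  intro r
  show (algebraMap (ZMod 2) (GaloisField 2 n) r) ^ 2 = _
  rw [← map_pow]
  congr 1
  revert r; decide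

lemma tr_sq {n : ℕ} (x : GaloisField 2 n) :
    Algebra.trace (ZMod 2) (GaloisField 2 n) (x ^ 2) =
      Algebra.trace (ZMod 2) (GaloisField 2 n) x := by
  obtain ⟨e, he⟩ := frob_algEquiv n
  rw [← he x, Algebra.trace_eq_of_algEquiv]

lemma tr_pow2 {n : ℕ} (j : ℕ) (x : GaloisField 2 n) :
    Algebra.trace (ZMod 2) (GaloisField 2 n) (x ^ 2 ^ j) =
      Algebra.trace (ZMod 2) (GaloisField 2 n) x := by
  induction j with
  | zero => simp
  | succ j ih =>
    rw [pow_succ, pow_mul, tr_sq, ih]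

/-- With `Q(x) = ∑ aᵢ x^{2^{kᵢ}+1}` and `L(u) = ∑ (aᵢ u^{2^{kᵢ}} + aᵢ^{2^{-kᵢ}} u^{2^{-kᵢ}})`:
if `L(u) = 0` then `Tr(Q(x+u)) = Tr(Q(x)) + Tr(Q(u))` for all `x`; in particular
`u ↦ (-1)^{Tr(Q(u))}` is a character of the additive group `K = ker L`. -/
theorem stmt_8 (n m : ℕ) (hn : 0 < n) (a : Fin m → GaloisField 2 n) (kk : Fin m → ℕ)
    (hkk : ∀ i, 0 < kk i) (u : GaloisField 2 n)
    (hu : (∑ i, (a i * u ^ 2 ^ kk i + ipow (kk i) (a i) * ipow (kk i) u)) = 0) :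
    (∀ x : GaloisField 2 n,
        Algebra.trace (ZMod 2) (GaloisField 2 n) (∑ i, a i * (x + u) ^ (2 ^ kk i + 1)) =
          Algebra.trace (ZMod 2) (GaloisField 2 n) (∑ i, a i * x ^ (2 ^ kk i + 1)) +
            Algebra.trace (ZMod 2) (GaloisField 2 n) (∑ i, a i * u ^ (2 ^ kk i + 1))) ∧
      (∀ v : GaloisField 2 n,
        (∑ i, (a i * v ^ 2 ^ kk i + ipow (kk i) (a i) * ipow (kk i) v)) = 0 →
          (if Algebra.trace (ZMod 2) (GaloisField 2 n)
              (∑ i, a i * (u + v) ^ (2 ^ kk i + 1)) = 0 then (1 : ℤ) else -1) =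
            (if Algebra.trace (ZMod 2) (GaloisField 2 n)
                (∑ i, a i * u ^ (2 ^ kk i + 1)) = 0 then (1 : ℤ) else -1) *
              (if Algebra.trace (ZMod 2) (GaloisField 2 n)
                  (∑ i, a i * v ^ (2 ^ kk i + 1)) = 0 then (1 : ℤ) else -1)) := by
  set T := Algebra.trace (ZMod 2) (GaloisField 2 n) with hT
  have key : ∀ x : GaloisField 2 n, T (∑ i, a i * (x + u) ^ (2 ^ kk i + 1)) =
      T (∑ i, a i * x ^ (2 ^ kk i + 1)) + T (∑ i, a i * u ^ (2 ^ kk i + 1)) := by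
    intro x
    have expand : (∑ i, a i * (x + u) ^ (2 ^ kk i + 1)) =
        (∑ i, a i * x ^ (2 ^ kk i + 1)) + (∑ i, a i * u ^ (2 ^ kk i + 1)) +
          (∑ i, (a i * u) * x ^ 2 ^ kk i) + (∑ i, (a i * u ^ 2 ^ kk i) * x) := by
      rw [← Finset.sum_add_distrib, ← Finset.sum_add_distrib, ← Finset.sum_add_distrib]
      refine Finset.sum_congr rfl fun i _ => ?_
      have h2 : (x + u) ^ (2 ^ kk i + 1) = (x ^ 2 ^ kk i + u ^ 2 ^ kk i) * (x + u) := by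
        rw [pow_succ, add_pow_char_pow x u 2 (kk i)]
      rw [h2]; ring
    rw [expand, map_add, map_add, map_add]
    have h3 : T (∑ i, (a i * u) * x ^ 2 ^ kk i) =
        T (∑ i, (ipow (kk i) (a i) * ipow (kk i) u) * x) := by
      rw [map_sum, map_sum]
      refine Finset.sum_congr rfl fun i _ => ?_
      have h4 : ((ipow (kk i) (a i) * ipow (kk i) u) * x) ^ 2 ^ kk i =
          (a i * u) * x ^ 2 ^ kk i := by
        rw [mul_pow, mul_pow, ipow_pow, ipow_pow]
      rw [← h4, tr_pow2]
    rw [h3]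
    have h5 : T (∑ i, (ipow (kk i) (a i) * ipow (kk i) u) * x) +
        T (∑ i, (a i * u ^ 2 ^ kk i) * x) = 0 := by
      rw [← map_add, ← Finset.sum_add_distrib]
      have : (∑ i, ((ipow (kk i) (a i) * ipow (kk i) u) * x + (a i * u ^ 2 ^ kk i) * x)) =
          (∑ i, (a i * u ^ 2 ^ kk i + ipow (kk i) (a i) * ipow (kk i) u)) * x := by
        rw [Finset.sum_mul]
        refine Finset.sum_congr rfl fun i _ => by ring
      rw [this, hu, zero_mul, map_zero]
    rw [add_assoc, h5, add_zero]
  refine ⟨key, fun v hv => ?_⟩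
  have huv : T (∑ i, a i * (u + v) ^ (2 ^ kk i + 1)) =
      T (∑ i, a i * u ^ (2 ^ kk i + 1)) + T (∑ i, a i * v ^ (2 ^ kk i + 1)) := by
    -- apply `key`-analogue with roles swapped: use v as kernel element, x := u
    have key' : ∀ x : GaloisField 2 n, T (∑ i, a i * (x + v) ^ (2 ^ kk i + 1)) =
        T (∑ i, a i * x ^ (2 ^ kk i + 1)) + T (∑ i, a i * v ^ (2 ^ kk i + 1)) := by
      intro x
      have expand : (∑ i, a i * (x + v) ^ (2 ^ kk i + 1)) =
          (∑ i, a i * x ^ (2 ^ kk i + 1)) + (∑ i, a i * v ^ (2 ^ kk i + 1)) +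
            (∑ i, (a i * v) * x ^ 2 ^ kk i) + (∑ i, (a i * v ^ 2 ^ kk i) * x) := by
        rw [← Finset.sum_add_distrib, ← Finset.sum_add_distrib, ← Finset.sum_add_distrib]
        refine Finset.sum_congr rfl fun i _ => ?_
        have h2 : (x + v) ^ (2 ^ kk i + 1) = (x ^ 2 ^ kk i + v ^ 2 ^ kk i) * (x + v) := by
          rw [pow_succ, add_pow_char_pow x v 2 (kk i)]
        rw [h2]; ring
      rw [expand, map_add, map_add, map_add]
      have h3 : T (∑ i, (a i * v) * x ^ 2 ^ kk i) =
          T (∑ i, (ipow (kk i) (a i) * ipow (kk i) v) * x) := by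
        rw [map_sum, map_sum]
        refine Finset.sum_congr rfl fun i _ => ?_
        have h4 : ((ipow (kk i) (a i) * ipow (kk i) v) * x) ^ 2 ^ kk i =
            (a i * v) * x ^ 2 ^ kk i := by
          rw [mul_pow, mul_pow, ipow_pow, ipow_pow]
        rw [← h4, tr_pow2]
      rw [h3]
      have h5 : T (∑ i, (ipow (kk i) (a i) * ipow (kk i) v) * x) +
          T (∑ i, (a i * v ^ 2 ^ kk i) * x) = 0 := by
        rw [← map_add, ← Finset.sum_add_distrib]
        have : (∑ i, ((ipow (kk i) (a i) * ipow (kk i) v) * x + (a i * v ^ 2 ^ kk i) * x)) =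
            (∑ i, (a i * v ^ 2 ^ kk i + ipow (kk i) (a i) * ipow (kk i) v)) * x := by
          rw [Finset.sum_mul]
          refine Finset.sum_congr rfl fun i _ => by ring
        rw [this, hv, zero_mul, map_zero]
      rw [add_assoc, h5, add_zero]
    exact key' u
  set α := T (∑ i, a i * u ^ (2 ^ kk i + 1))
  set β := T (∑ i, a i * v ^ (2 ^ kk i + 1))
  rw [huv]
  have hcases : ∀ c : ZMod 2, c = 0 ∨ c = 1 := by decide
  rcases hcases α with h1 | h1 <;> rcases hcases β with h2 | h2 <;>
    simp [h1, h2] <;> decide
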